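/- ε-cutoff lemma (Lemma 3.1): Let Γ be a locally finite graph, R ⊆ 𝕍 a finite subset, μ_{xy} = μ_{yx} ∈ [0,1] for x∼y, and 0 < ε < 1; set μ^ε_{xy} = max(ε, μ_{xy}), deg^R(x) = #{y∈R : y∼x}, and μ_x^R = Σ_{y∈R: y∼x} μ_{xy}. Then for every f: R → ℝ: (1/2)·Σ_{x,y∈R: x∼y} μ^ε_{xy}·(f(x)−f(y))² ≤ (1/2)·Σ_{x,y∈R: x∼y} μ_{xy}·(f(x)−f(y))² + 4ε·(1−ε)^{-1}·Σ_{x∈R} (deg^R(x) − μ_x^R)·f(x)². In particular, taking ε = 1/5: Σ_{x,y∈R: x∼y} (f(x)−f(y))² ≤ 10·[ (1/2)·Σ_{x,y∈R: x∼y} μ_{xy}·(f(x)−f(y))² + Σ_{x∈R} (deg^R(x) − μ_x^R)·f(x)² ]. All double sums range over ordered pairs of adjacent vertices of R. -/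
import Mathlib


open scoped BigOperators

namespace LandscapeGraph

variable {V : Type*}

/-- Ball of real radius `r` with respect to the shortest-path graph metric. -/
def gball (G : SimpleGraph V) (x : V) (r : ℝ) : Set V :=
  {y | G.Reachable x y ∧ (G.dist x y : ℝ) ≤ r}

/-- The degree of a vertex, as a real number. -/
noncomputable def ndeg (G : SimpleGraph V) (x : V) : ℝ := ((G.neighborSet x).ncard : ℝ)

/-- The graph Laplacian `Δf(x) = Σ_{y∼x} (f(y) - f(x))`. -/
noncomputable def lap (G : SimpleGraph V) (f : V → ℝ) (x : V) : ℝ :=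
  ∑ᶠ y ∈ G.neighborSet x, (f y - f x)

/-- Volume control (Ahlfors `α`-regularity) with parameters `(α, cL, cU)`. -/
def VolCtrl (G : SimpleGraph V) (α cL cU : ℝ) : Prop :=
  ∀ x : V, ∀ r : ℝ, 1 ≤ r →
    cL * r ^ α ≤ ((gball G x r).ncard : ℝ) ∧ ((gball G x r).ncard : ℝ) ≤ cU * r ^ α

/-- Degree-weighted average of `f` over a set `S`. -/
noncomputable def wavg (G : SimpleGraph V) (S : Set V) (f : V → ℝ) : ℝ :=
  (∑ᶠ z ∈ S, f z * ndeg G z) / ∑ᶠ z ∈ S, ndeg G z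

/-- The Dirichlet-type energy `Σ_{z,w∈S, z∼w} (f z - f w)²` (over ordered pairs). -/
noncomputable def pairEnergy (G : SimpleGraph V) (S : Set V) (f : V → ℝ) : ℝ :=
  ∑ᶠ z ∈ S, ∑ᶠ w ∈ {w ∈ S | G.Adj z w}, (f z - f w) ^ 2

/-- The weak Poincaré inequality with constants `(CP, lam)`. -/
def WeakPI (G : SimpleGraph V) (CP lam : ℝ) : Prop :=
  ∀ x : V, ∀ r : ℝ, 1 ≤ r → ∀ f : V → ℝ,
    (∑ᶠ z ∈ gball G x r, (f z - wavg G (gball G x r) f) ^ 2) ≤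
      CP * r ^ 2 * pairEnergy G (gball G x (lam * r)) f

/-- The Dirichlet restriction `H^A` of the Jacobi operator, acting on functions. -/
noncomputable def HAop (G : SimpleGraph V) (μ : V → V → ℝ) (Vpot : V → ℝ) (A : Set V)
    (f : V → ℝ) (x : V) : ℝ :=
  ndeg G x * f x - (∑ᶠ y ∈ {y ∈ A | G.Adj x y}, μ x y * f y) + Vpot x * f x

/-- Symmetric bond weights with values in `[0,1]`. -/
def BondWeights (G : SimpleGraph V) (μ : V → V → ℝ) : Prop :=
  ∀ x y, G.Adj x y → μ x y = μ y x ∧ 0 ≤ μ x y ∧ μ x y ≤ 1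

/-- `u` is the landscape function of `H^A`: positive on `A` and solving `H^A u = 1` on `A`. -/
def IsLandscape (G : SimpleGraph V) (μ : V → V → ℝ) (Vpot : V → ℝ) (A : Finset V)
    (u : V → ℝ) : Prop :=
  (∀ x ∈ A, 0 < u x) ∧ ∀ x ∈ A, HAop G μ Vpot (↑A) u x = 1

open Classical in
/-- The Dirichlet restriction `H^A` as a matrix indexed by `A`. -/
noncomputable def HAmat (G : SimpleGraph V) (μ : V → V → ℝ) (Vpot : V → ℝ) (A : Finset V) :
    Matrix A A ℝ := fun x y =>
  (if (x : V) = (y : V) then ndeg G (x : V) + Vpot (x : V) else 0) -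
    (if G.Adj (x : V) (y : V) then μ (x : V) (y : V) else 0)

open Classical in
/-- The integrated density of states: number of eigenvalues `≤ E` (with multiplicity),
divided by `|A|`. -/
noncomputable def NA {A : Finset V} {M : Matrix A A ℝ} (hM : M.IsHermitian) (E : ℝ) : ℝ :=
  ((Finset.univ.filter fun i => hM.eigenvalues i ≤ E).card : ℝ) / (A.card : ℝ)

/-- `Z` is the set of centers of a covering of `𝕍` by balls of radius `R`
with finite overlap constant `b`. -/
def IsCover (G : SimpleGraph V) (Z : Set V) (R b : ℝ) : Prop :=
  (∀ y : V, ∃ z ∈ Z, y ∈ gball G z R) ∧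
    ∀ y : V, (({z ∈ Z | y ∈ gball G z R}).ncard : ℝ) ≤ b

/-- The landscape counting function `N_u^{𝒫,A}(E)` for the cover with centers `Z` and radius `R`:
the number of balls `B` of the cover with `min_{x ∈ B∩A} 1/u(x) ≤ E`, divided by `|A|`. -/
noncomputable def Nu (G : SimpleGraph V) (u : V → ℝ) (A : Finset V) (Z : Set V) (R E : ℝ) : ℝ :=
  (({z ∈ Z | ∃ x ∈ A, x ∈ gball G z R ∧ 1 / u x ≤ E}).ncard : ℝ) / (A.card : ℝ)

/-- The diameter of a finite set of vertices in the graph metric. -/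
noncomputable def diamA (G : SimpleGraph V) (A : Finset V) : ℝ :=
  ((A.sup fun x => A.sup fun y => G.dist x y : ℕ) : ℝ)

/-- `A` has sufficient overlap with balls, with constant `cA`. -/
def SuffOverlap (G : SimpleGraph V) (A : Finset V) (α cA : ℝ) : Prop :=
  ∀ x ∈ A, ∀ r : ℝ, 1 ≤ r → r ≤ 4 * diamA G A →
    cA * r ^ α ≤ (((↑A : Set V) ∩ gball G x r).ncard : ℝ)

/-- The Dirichlet Laplacian `-Δ^B` of a region `B`, acting on functions:
`(-Δ^B f)(x) = deg(x) f(x) - Σ_{y ∈ B, y ∼ x} f(y)`. -/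
noncomputable def negDirLap (G : SimpleGraph V) (B : Set V) (f : V → ℝ) (x : V) : ℝ :=
  ndeg G x * f x - ∑ᶠ y ∈ {y ∈ B | G.Adj x y}, f y

/-- Exterior (vertex) boundary of a set. -/
def extBoundary (G : SimpleGraph V) (S : Set V) : Set V :=
  {x | x ∉ S ∧ ∃ y ∈ S, G.Adj x y}

/-- Ball with respect to an abstract metric `d`. -/
def dball (d : V → V → ℝ) (ξ : V) (R : ℝ) : Set V := {y | d ξ y ≤ R}

/-- The harmonic weight assumption: a metric `d` strongly equivalent (constant `c`) to the
graph metric, together with harmonic weights `h ξ R : B^d(ξ,R) → [0,1]` satisfying the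
submean property for subharmonic functions (with equality for harmonic ones), and a
uniform lower bound `c' / |B^d(ξ,R)|` off `bad' sets `X ξ R` of asymptotically
negligible proportion. -/
structure HarmonicWeight (G : SimpleGraph V) (d : V → V → ℝ) (h : V → ℝ → V → ℝ)
    (X : V → ℝ → Set V) (c c' : ℝ) : Prop where
  c_one : 1 ≤ c
  c'_pos : 0 < c'
  d_self : ∀ x, d x x = 0
  d_eq_zero : ∀ x y, d x y = 0 → x = y
  d_symm : ∀ x y, d x y = d y x
  d_triangle : ∀ x y z, d x z ≤ d x y + d y z
  d_lower : ∀ x y, c⁻¹ * (G.dist x y : ℝ) ≤ d x y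
  d_upper : ∀ x y, d x y ≤ c * (G.dist x y : ℝ)
  h_mem : ∀ ξ (R : ℝ) y, y ∈ dball d ξ R → h ξ R y ∈ Set.Icc (0 : ℝ) 1
  submean : ∀ ξ (R : ℝ), 0 < R → ∀ f : V → ℝ,
    (∀ x ∈ dball d ξ R ∪ extBoundary G (dball d ξ R), 0 ≤ lap G f x) →
    f ξ ≤ ∑ᶠ y ∈ dball d ξ R, h ξ R y * f y
  harm_eq : ∀ ξ (R : ℝ), 0 < R → ∀ f : V → ℝ,
    (∀ x ∈ dball d ξ R ∪ extBoundary G (dball d ξ R), lap G f x = 0) →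
    f ξ = ∑ᶠ y ∈ dball d ξ R, h ξ R y * f y
  X_subset : ∀ ξ (R : ℝ), X ξ R ⊆ dball d ξ R
  h_lower : ∀ ξ (R : ℝ), ∀ y ∈ dball d ξ R \ X ξ R,
    c' / ((dball d ξ R).ncard : ℝ) ≤ h ξ R y
  X_small : ∀ ε : ℝ, 0 < ε → ∃ R₀ : ℝ, ∀ R : ℝ, R₀ ≤ R → ∀ ξ : V,
    ((X ξ R).ncard : ℝ) ≤ ε * ((dball d ξ R).ncard : ℝ)



private lemma ptwise_cutoff (ε m a b : ℝ) (hε0 : 0 < ε) (hε1 : ε < 1)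
    (hm0 : 0 ≤ m) (hm1 : m ≤ 1) :
    max ε m * (a - b) ^ 2 ≤
      m * (a - b) ^ 2 + 2 * ε * (1 - ε)⁻¹ * ((1 - m) * (a ^ 2 + b ^ 2)) := by
  have h1 : (0:ℝ) < 1 - ε := by linarith
  have hcinv : (0:ℝ) ≤ (1 - ε)⁻¹ := by positivity
  rcases le_total m ε with h | h
  · rw [max_eq_left h]
    have h2 : (a - b) ^ 2 ≤ 2 * (a ^ 2 + b ^ 2) := by nlinarith [sq_nonneg (a + b)]
    have hK : (0:ℝ) ≤ ε * (1 - ε)⁻¹ * (1 - m) := by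
      apply mul_nonneg (mul_nonneg hε0.le hcinv); linarith
    have key : ε - m ≤ ε * (1 - ε)⁻¹ * (1 - m) := by
      have h3 : (1:ℝ) ≤ (1 - m) / (1 - ε) := (one_le_div h1).2 (by linarith)
      calc ε - m ≤ ε := by linarith
        _ = ε * 1 := (mul_one ε).symm
        _ ≤ ε * ((1 - m) / (1 - ε)) := mul_le_mul_of_nonneg_left h3 hε0.le
        _ = ε * (1 - ε)⁻¹ * (1 - m) := by ring
    have h5 := mul_le_mul key h2 (sq_nonneg (a - b)) hK
    nlinarith [h5]
  · rw [max_eq_right h]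
    have hT : (0:ℝ) ≤ 2 * ε * (1 - ε)⁻¹ * ((1 - m) * (a ^ 2 + b ^ 2)) := by
      apply mul_nonneg (mul_nonneg (by positivity) hcinv)
      apply mul_nonneg (by linarith) (by positivity)
    linarith

open Classical in
private lemma cutoff_core {V : Type*} (G : SimpleGraph V) (R : Finset V)
    (μ : V → V → ℝ) (hμ : BondWeights G μ)
    (ε : ℝ) (hε0 : 0 < ε) (hε1 : ε < 1) (f : V → ℝ) :
    (∑ x ∈ R, ∑ y ∈ R.filter (fun y => G.Adj x y), max ε (μ x y) * (f x - f y) ^ 2) ≤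
      (∑ x ∈ R, ∑ y ∈ R.filter (fun y => G.Adj x y), μ x y * (f x - f y) ^ 2) +
        4 * ε * (1 - ε)⁻¹ *
          ∑ x ∈ R, (((R.filter (fun y => G.Adj x y)).card : ℝ) -
            ∑ y ∈ R.filter (fun y => G.Adj x y), μ x y) * f x ^ 2 := by
  set c := (1 - ε)⁻¹ with hc
  have step1 : (∑ x ∈ R, ∑ y ∈ R.filter (fun y => G.Adj x y), max ε (μ x y) * (f x - f y) ^ 2)
      ≤ ∑ x ∈ R, ∑ y ∈ R.filter (fun y => G.Adj x y),
          (μ x y * (f x - f y) ^ 2 + 2 * ε * c * ((1 - μ x y) * (f x ^ 2 + f y ^ 2))) := by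
    refine Finset.sum_le_sum fun x hx => Finset.sum_le_sum fun y hy => ?_
    obtain ⟨hyR, hadj⟩ := Finset.mem_filter.1 hy
    obtain ⟨-, h0, h1⟩ := hμ x y hadj
    exact ptwise_cutoff ε (μ x y) (f x) (f y) hε0 hε1 h0 h1
  have eq2 : (∑ x ∈ R, ∑ y ∈ R.filter (fun y => G.Adj x y),
        (μ x y * (f x - f y) ^ 2 + 2 * ε * c * ((1 - μ x y) * (f x ^ 2 + f y ^ 2))))
      = (∑ x ∈ R, ∑ y ∈ R.filter (fun y => G.Adj x y), μ x y * (f x - f y) ^ 2)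
        + (∑ x ∈ R, ∑ y ∈ R.filter (fun y => G.Adj x y),
            2 * ε * c * ((1 - μ x y) * (f x ^ 2 + f y ^ 2))) := by
    simp only [Finset.sum_add_distrib]
  have eq3 : (∑ x ∈ R, ∑ y ∈ R.filter (fun y => G.Adj x y),
        2 * ε * c * ((1 - μ x y) * (f x ^ 2 + f y ^ 2)))
      = 2 * ε * c * ((∑ x ∈ R, ∑ y ∈ R.filter (fun y => G.Adj x y), (1 - μ x y) * f x ^ 2)
        + ∑ x ∈ R, ∑ y ∈ R.filter (fun y => G.Adj x y), (1 - μ x y) * f y ^ 2) := by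
    rw [mul_add]
    simp only [Finset.mul_sum, ← Finset.sum_add_distrib]
    refine Finset.sum_congr rfl fun x _ => Finset.sum_congr rfl fun y _ => by ring
  have swap : (∑ x ∈ R, ∑ y ∈ R.filter (fun y => G.Adj x y), (1 - μ x y) * f y ^ 2)
      = ∑ x ∈ R, ∑ y ∈ R.filter (fun y => G.Adj x y), (1 - μ x y) * f x ^ 2 := by
    simp only [Finset.sum_filter]
    rw [Finset.sum_comm]
    refine Finset.sum_congr rfl fun x _ => Finset.sum_congr rfl fun y _ => ?_
    by_cases h : G.Adj x y
    · rw [if_pos h, if_pos h.symm, (hμ x y h).1]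
    · rw [if_neg h, if_neg (fun h' => h h'.symm)]
  have expand : (∑ x ∈ R, ∑ y ∈ R.filter (fun y => G.Adj x y), (1 - μ x y) * f x ^ 2)
      = ∑ x ∈ R, (((R.filter (fun y => G.Adj x y)).card : ℝ) -
          ∑ y ∈ R.filter (fun y => G.Adj x y), μ x y) * f x ^ 2 := by
    refine Finset.sum_congr rfl fun x _ => ?_
    rw [← Finset.sum_mul, Finset.sum_sub_distrib]
    simp
  rw [eq2, eq3, swap, expand] at step1
  have : 2 * ε * c * (∑ x ∈ R, (((R.filter (fun y => G.Adj x y)).card : ℝ) -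
          ∑ y ∈ R.filter (fun y => G.Adj x y), μ x y) * f x ^ 2
        + ∑ x ∈ R, (((R.filter (fun y => G.Adj x y)).card : ℝ) -
          ∑ y ∈ R.filter (fun y => G.Adj x y), μ x y) * f x ^ 2)
      = 4 * ε * c * ∑ x ∈ R, (((R.filter (fun y => G.Adj x y)).card : ℝ) -
          ∑ y ∈ R.filter (fun y => G.Adj x y), μ x y) * f x ^ 2 := by ring
  linarith [step1, this]

/-- **`ε`-cutoff lemma** (Lemma 3.1).  With `μ^ε_{xy} = max ε μ_{xy}`,
`deg^R(x)` the number of neighbors of `x` in `R`, and `μ_x^R = Σ_{y∈R, y∼x} μ_{xy}`,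
one has the truncation inequality, and (for `ε = 1/5`) its consequence with constant `10`. -/
theorem eps_cutoff
    {V : Type*}
    (G : SimpleGraph V) (hlf : ∀ x : V, (G.neighborSet x).Finite)
    (R : Finset V)
    (μ : V → V → ℝ) (hμ : BondWeights G μ)
    (ε : ℝ) (hε0 : 0 < ε) (hε1 : ε < 1)
    (f : V → ℝ) :
    ((1 / 2) * (∑ᶠ x ∈ (↑R : Set V), ∑ᶠ y ∈ {y ∈ (↑R : Set V) | G.Adj x y},
          max ε (μ x y) * (f x - f y) ^ 2) ≤
        (1 / 2) * (∑ᶠ x ∈ (↑R : Set V), ∑ᶠ y ∈ {y ∈ (↑R : Set V) | G.Adj x y},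
            μ x y * (f x - f y) ^ 2) +
          4 * ε * (1 - ε)⁻¹ *
            ∑ᶠ x ∈ (↑R : Set V),
              ((({y ∈ (↑R : Set V) | G.Adj x y}).ncard : ℝ) -
                  ∑ᶠ y ∈ {y ∈ (↑R : Set V) | G.Adj x y}, μ x y) * f x ^ 2) ∧
      (∑ᶠ x ∈ (↑R : Set V), ∑ᶠ y ∈ {y ∈ (↑R : Set V) | G.Adj x y}, (f x - f y) ^ 2) ≤
        10 * ((1 / 2) * (∑ᶠ x ∈ (↑R : Set V), ∑ᶠ y ∈ {y ∈ (↑R : Set V) | G.Adj x y},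
              μ x y * (f x - f y) ^ 2) +
            ∑ᶠ x ∈ (↑R : Set V),
              ((({y ∈ (↑R : Set V) | G.Adj x y}).ncard : ℝ) -
                  ∑ᶠ y ∈ {y ∈ (↑R : Set V) | G.Adj x y}, μ x y) * f x ^ 2) := by
  classical
  have hset : ∀ x : V, {y ∈ (↑R : Set V) | G.Adj x y}
      = ((R.filter (fun y => G.Adj x y) : Finset V) : Set V) := by
    intro x; ext y; simp
  simp only [hset, finsum_mem_coe_finset, Set.ncard_coe_finset]
  have hDpos : 0 ≤ ∑ x ∈ R, (((R.filter (fun y => G.Adj x y)).card : ℝ) -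
      ∑ y ∈ R.filter (fun y => G.Adj x y), μ x y) * f x ^ 2 := by
    refine Finset.sum_nonneg fun x _ => mul_nonneg ?_ (sq_nonneg _)
    have h1 : (∑ y ∈ R.filter (fun y => G.Adj x y), μ x y)
        ≤ ∑ y ∈ R.filter (fun y => G.Adj x y), (1:ℝ) := by
      refine Finset.sum_le_sum fun y hy => (hμ x y (Finset.mem_filter.1 hy).2).2.2
    simp only [Finset.sum_const, nsmul_eq_mul, mul_one] at h1
    linarith
  have core := cutoff_core G R μ hμ ε hε0 hε1 f
  have core5 := cutoff_core G R μ hμ (1/5) (by norm_num) (by norm_num) f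
  have hεc : 0 ≤ 4 * ε * (1 - ε)⁻¹ * ∑ x ∈ R, (((R.filter (fun y => G.Adj x y)).card : ℝ) -
      ∑ y ∈ R.filter (fun y => G.Adj x y), μ x y) * f x ^ 2 := by
    have h2 : (0:ℝ) < 1 - ε := by linarith
    have h3 : (0:ℝ) ≤ 4 * ε * (1 - ε)⁻¹ := by positivity
    exact mul_nonneg h3 hDpos
  constructor
  · linarith
  · have h5c : (4 : ℝ) * (1/5) * (1 - 1/5)⁻¹ = 1 := by norm_num
    rw [h5c, one_mul] at core5
    have hE : (∑ x ∈ R, ∑ y ∈ R.filter (fun y => G.Adj x y), (f x - f y) ^ 2)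
        ≤ 5 * ∑ x ∈ R, ∑ y ∈ R.filter (fun y => G.Adj x y),
            max (1/5) (μ x y) * (f x - f y) ^ 2 := by
      rw [Finset.mul_sum]
      refine Finset.sum_le_sum fun x _ => ?_
      rw [Finset.mul_sum]
      refine Finset.sum_le_sum fun y _ => ?_
      nlinarith [le_max_left (1/5 : ℝ) (μ x y), sq_nonneg (f x - f y)]
    linarith

end LandscapeGraph
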